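/- Let m ≥ 2 and suppose [1],[2],...,[2m²+m] is a cyclic ordering of the edges of K_{2m+1} in which every m cyclically consecutive edges are pairwise disjoint. For each i with 1 ≤ i ≤ m, the 2m+1 sets of edges M_{[i+km]} = {[i+km],[i+km+1],...,[i+km+m-1]} for k = 0,1,...,2m (indices modulo 2m²+m) are near-perfect matchings that partition the edge set of K_{2m+1}, and every vertex of K_{2m+1} is the isolated vertex of exactly one of these 2m+1 matchings. -/

import Mathlib

/-- Two edges of a graph (as unordered pairs of vertices) are *disjoint*
if they share no vertex. -/
def edgesDisjoint {V : Type*} (e₁ e₂ : Sym2 V) : Prop :=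
  ∀ v : V, v ∈ e₁ → v ∉ e₂

/-- The number of edges of a graph `G`. -/
noncomputable def edgeCount {V : Type*} (G : SimpleGraph V) : ℕ :=
  Nat.card G.edgeSet

/-- A linear ordering `f` of the edges of `G` has matching number at least `d`
if every `d` consecutive edges in the ordering are pairwise disjoint. -/
def LinearGood {V : Type*} (G : SimpleGraph V)
    (f : Fin (edgeCount G) ≃ G.edgeSet) (d : ℕ) : Prop :=
  ∀ j k : Fin (edgeCount G), j ≠ k → (j : ℕ) < (k : ℕ) + d → (k : ℕ) < (j : ℕ) + d →
    edgesDisjoint (f j : Sym2 V) (f k : Sym2 V)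

/-- The matching sequencibility `ms G`: the largest `d` (necessarily at most the
number of edges) for which some linear ordering of the edges of `G` has every
`d` consecutive edges forming a matching. -/
noncomputable def ms {V : Type*} (G : SimpleGraph V) : ℕ :=
  sSup {d : ℕ | d ≤ edgeCount G ∧ ∃ f : Fin (edgeCount G) ≃ G.edgeSet, LinearGood G f d}

/-- A cyclic ordering `f : ZMod N ≃ edges of G` has cyclic matching number at least `d`
if every `d` cyclically consecutive edges in the ordering are pairwise disjoint. -/
def CyclicGood {V : Type*} (G : SimpleGraph V) {N : ℕ}
    (f : ZMod N ≃ G.edgeSet) (d : ℕ) : Prop :=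
  ∀ (i : ZMod N) (j k : ℕ), j < d → k < d → j ≠ k →
    edgesDisjoint (f (i + (j : ZMod N)) : Sym2 V) (f (i + (k : ZMod N)) : Sym2 V)

/-- The cyclic matching sequencibility `cms G`: the largest `d` for which some
cyclic ordering of the edges of `G` has every `d` cyclically consecutive edges
forming a matching. -/
noncomputable def cms {V : Type*} (G : SimpleGraph V) : ℕ :=
  sSup {d : ℕ | ∃ f : ZMod (edgeCount G) ≃ G.edgeSet, CyclicGood G f d}

private lemma card_filter_mem_sym2 {V : Type*} [Fintype V] [DecidableEq V]
    {e : Sym2 V} (he : ¬ e.IsDiag) :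
    (Finset.univ.filter (fun v => v ∈ e)).card = 2 := by
  induction e using Sym2.ind with
  | _ a b =>
    rw [Sym2.isDiag_iff_proj_eq] at he
    have hset : Finset.univ.filter (fun v => v ∈ (s(a,b) : Sym2 V)) = {a, b} := by
      ext v; simp [Sym2.mem_iff]
    rw [hset, Finset.card_insert_of_notMem (by simpa using he), Finset.card_singleton]

/-- Suppose `m ≥ 2` and `f` is a cyclic ordering of the `2m² + m`
edges of `K_{2m+1}` in which every `m` cyclically consecutive edges are pairwise
disjoint.  For each `1 ≤ i ≤ m`, the `2m+1` blocks
`M_{[i+km]} = {f(i+km), …, f(i+km+m-1)}`, `k = 0, 1, …, 2m`, leave exactly one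
vertex uncovered each (so they are near-perfect matchings), they partition the edge
set of `K_{2m+1}` (every edge lies in exactly one block), and every vertex is the
uncovered (isolated) vertex of exactly one of the `2m+1` blocks. -/
theorem near_perfect_matching_partition (m : ℕ) (hm : 2 ≤ m)
    (f : ZMod (2 * m ^ 2 + m) ≃ (⊤ : SimpleGraph (Fin (2 * m + 1))).edgeSet)
    (hf : CyclicGood (⊤ : SimpleGraph (Fin (2 * m + 1))) f m) :
    ∀ i : ℕ, 1 ≤ i → i ≤ m →
      (∀ k : ℕ, k ≤ 2 * m → ∃! v : Fin (2 * m + 1), ∀ j : ℕ, j < m →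
        v ∉ (f ((i + k * m + j : ℕ) : ZMod (2 * m ^ 2 + m)) : Sym2 (Fin (2 * m + 1)))) ∧
      (∀ e ∈ (⊤ : SimpleGraph (Fin (2 * m + 1))).edgeSet, ∃! k : ℕ, k ≤ 2 * m ∧
        ∃ j : ℕ, j < m ∧
          e = (f ((i + k * m + j : ℕ) : ZMod (2 * m ^ 2 + m)) : Sym2 (Fin (2 * m + 1)))) ∧
      (∀ v : Fin (2 * m + 1), ∃! k : ℕ, k ≤ 2 * m ∧ ∀ j : ℕ, j < m →
        v ∉ (f ((i + k * m + j : ℕ) : ZMod (2 * m ^ 2 + m)) : Sym2 (Fin (2 * m + 1)))) := by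
  have hm0 : 0 < m := by omega
  have hN : 2 * m ^ 2 + m = (2 * m + 1) * m := by ring
  have hNpos : 0 < 2 * m ^ 2 + m := by positivity
  haveI : NeZero (2 * m ^ 2 + m) := ⟨hNpos.ne'⟩
  intro i hi1 him
  have hcast : ∀ t : ZMod (2 * m ^ 2 + m), ((t.val : ℕ) : ZMod (2 * m ^ 2 + m)) = t :=
    fun t => by rw [ZMod.natCast_val, ZMod.cast_id]
    -- disjointness of two distinct edges within one block
  have hdisj : ∀ (a j j' : ℕ), j < m → j' < m → j ≠ j' →
      edgesDisjoint (f ((a + j : ℕ) : ZMod (2 * m ^ 2 + m)) : Sym2 (Fin (2 * m + 1)))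
        (f ((a + j' : ℕ) : ZMod (2 * m ^ 2 + m)) : Sym2 (Fin (2 * m + 1))) := by
    intro a j j' hj hj' hne
    have h := hf ((a : ℕ) : ZMod (2 * m ^ 2 + m)) j j' hj hj' hne
    have e1 : ((a : ℕ) : ZMod (2 * m ^ 2 + m)) + (j : ZMod (2 * m ^ 2 + m)) = ((a + j : ℕ) : ZMod (2 * m ^ 2 + m)) := by
      push_cast; ring
    have e2 : ((a : ℕ) : ZMod (2 * m ^ 2 + m)) + (j' : ZMod (2 * m ^ 2 + m)) = ((a + j' : ℕ) : ZMod (2 * m ^ 2 + m)) := by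
      push_cast; ring
    rwa [e1, e2] at h
  -- decomposition of an arbitrary index into block/offset form
  have hdecomp : ∀ t : ZMod (2 * m ^ 2 + m),
      ((i + (t - (i : ZMod (2 * m ^ 2 + m))).val / m * m + (t - (i : ZMod (2 * m ^ 2 + m))).val % m : ℕ) : ZMod (2 * m ^ 2 + m)) = t := by
    intro t
    have hdm := Nat.div_add_mod' (t - (i : ZMod (2 * m ^ 2 + m))).val m
    have h1 : i + (t - (i : ZMod (2 * m ^ 2 + m))).val / m * m + (t - (i : ZMod (2 * m ^ 2 + m))).val % m
        = i + (t - (i : ZMod (2 * m ^ 2 + m))).val := by omega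
    rw [h1]
    push_cast
    rw [hcast]
    ring
  have hglt : ∀ t : ZMod (2 * m ^ 2 + m), (t - (i : ZMod (2 * m ^ 2 + m))).val / m < 2 * m + 1 := by
    intro t
    refine (Nat.div_lt_iff_lt_mul hm0).mpr ?_
    have := ZMod.val_lt (t - (i : ZMod (2 * m ^ 2 + m)))
    omega
  have hlt_blk : ∀ k j : ℕ, k ≤ 2 * m → j < m → k * m + j < 2 * m ^ 2 + m := by
    intro k j hk hj
    have hkm : k * m ≤ 2 * m * m := Nat.mul_le_mul_right m hk
    have hN2 : 2 * m ^ 2 + m = 2 * m * m + m := by ring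
    omega
  refine ⟨?_, ?_, ?_⟩
  · -- Part 1: each block has exactly one uncovered vertex
    intro k hk
    classical
    set C : Finset (Fin (2 * m + 1)) :=
      (Finset.range m).biUnion
        (fun j => Finset.univ.filter
          (fun v => v ∈ (f ((i + k * m + j : ℕ) : ZMod (2 * m ^ 2 + m)) : Sym2 (Fin (2 * m + 1))))) with hC
    have hCcard : C.card = 2 * m := by
      rw [hC, Finset.card_biUnion]
      · have hone : ∀ j ∈ Finset.range m,
            (Finset.univ.filter
              (fun v => v ∈ (f ((i + k * m + j : ℕ) : ZMod (2 * m ^ 2 + m)) : Sym2 (Fin (2 * m + 1))))).card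
              = 2 := by
          intro j _
          exact card_filter_mem_sym2
            (SimpleGraph.not_isDiag_of_mem_edgeSet _ (f ((i + k * m + j : ℕ) : ZMod (2 * m ^ 2 + m))).2)
        rw [Finset.sum_congr rfl hone]
        simp [mul_comm]
      · intro j hj j' hj' hne
        rw [Function.onFun, Finset.disjoint_left]
        intro v hv hv'
        simp only [Finset.mem_filter] at hv hv'
        exact hdisj (i + k * m) j j' (Finset.mem_range.mp hj) (Finset.mem_range.mp hj') hne
          v hv.2 hv'.2
    have hU : (Finset.univ \ C).card = 1 := by
      rw [Finset.card_sdiff_of_subset (Finset.subset_univ C), hCcard, Finset.card_univ, Fintype.card_fin]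
      omega
    obtain ⟨v, hv⟩ := Finset.card_eq_one.mp hU
    have hmemU : ∀ w : Fin (2 * m + 1), w ∈ Finset.univ \ C ↔
        (∀ j : ℕ, j < m →
          w ∉ (f ((i + k * m + j : ℕ) : ZMod (2 * m ^ 2 + m)) : Sym2 (Fin (2 * m + 1)))) := by
      intro w
      simp only [hC, Finset.mem_sdiff, Finset.mem_univ, true_and, Finset.mem_biUnion,
        Finset.mem_filter, Finset.mem_range, not_exists, not_and]
    refine ⟨v, (hmemU v).mp (hv ▸ Finset.mem_singleton_self v), ?_⟩
    intro w hw
    have := (hmemU w).mpr hw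
    rw [hv] at this
    exact Finset.mem_singleton.mp this
  · -- Part 2: the blocks partition the edge set
    intro e he
    set t := f.symm ⟨e, he⟩ with ht
    refine ⟨(t - (i : ZMod (2 * m ^ 2 + m))).val / m, ⟨?_, (t - (i : ZMod (2 * m ^ 2 + m))).val % m,
      Nat.mod_lt _ hm0, ?_⟩, ?_⟩
    · have := hglt t; omega
    · rw [hdecomp t, ht, Equiv.apply_symm_apply]
    · rintro k' ⟨hk', j', hj', he'⟩
      have hfe : f ((i + k' * m + j' : ℕ) : ZMod (2 * m ^ 2 + m)) = ⟨e, he⟩ := Subtype.ext he'.symm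
      have harg : ((i + k' * m + j' : ℕ) : ZMod (2 * m ^ 2 + m)) = t := (Equiv.eq_symm_apply f).mpr hfe
      have h2 : ((k' * m + j' : ℕ) : ZMod (2 * m ^ 2 + m)) = t - (i : ZMod (2 * m ^ 2 + m)) := by
        push_cast at harg ⊢
        linear_combination harg
      have hveq : k' * m + j' = (t - (i : ZMod (2 * m ^ 2 + m))).val := by
        have := congrArg ZMod.val h2
        rwa [ZMod.val_cast_of_lt (hlt_blk k' j' hk' hj')] at this
      rw [← hveq, mul_comm, Nat.mul_add_div hm0, Nat.div_eq_of_lt hj']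
      omega
  · -- Part 3: each vertex is isolated in exactly one block
    intro v
    classical
    set T : Finset (ZMod (2 * m ^ 2 + m)) :=
      Finset.univ.filter (fun t => v ∈ (f t : Sym2 (Fin (2 * m + 1)))) with hTdef
    have hTcard : T.card = 2 * m := by
      have hbij : T.card = ((⊤ : SimpleGraph (Fin (2 * m + 1))).incidenceFinset v).card := by
        apply Finset.card_bij (fun t _ => (f t : Sym2 (Fin (2 * m + 1))))
        · intro t htm
          rw [SimpleGraph.mem_incidenceFinset]
          exact ⟨(f t).2, (Finset.mem_filter.mp htm).2⟩
        · intro a _ b _ hab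
          exact f.injective (Subtype.ext hab)
        · intro e heI
          rw [SimpleGraph.mem_incidenceFinset] at heI
          refine ⟨f.symm ⟨e, heI.1⟩, ?_, by simp⟩
          rw [hTdef, Finset.mem_filter]
          refine ⟨Finset.mem_univ _, ?_⟩
          rw [Equiv.apply_symm_apply]
          exact heI.2
      rw [hbij, SimpleGraph.card_incidenceFinset_eq_degree, SimpleGraph.complete_graph_degree,
        Fintype.card_fin]
      omega
    have hg_injOn : Set.InjOn (fun t : ZMod (2 * m ^ 2 + m) => (t - (i : ZMod (2 * m ^ 2 + m))).val / m) T := by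
      intro t ht t' ht' hgt
      by_contra hne
      simp only at hgt
      have hrne : (t - (i : ZMod (2 * m ^ 2 + m))).val % m ≠ (t' - (i : ZMod (2 * m ^ 2 + m))).val % m := by
        intro hr
        apply hne
        rw [← hdecomp t, ← hdecomp t', hgt, hr]
      have hd := hdisj (i + (t - (i : ZMod (2 * m ^ 2 + m))).val / m * m) _ _
        (Nat.mod_lt _ hm0) (Nat.mod_lt _ hm0) hrne
      have h1 : ((i + (t - (i : ZMod (2 * m ^ 2 + m))).val / m * m + (t - (i : ZMod (2 * m ^ 2 + m))).val % m : ℕ)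
          : ZMod (2 * m ^ 2 + m)) = t := hdecomp t
      have h2 : ((i + (t - (i : ZMod (2 * m ^ 2 + m))).val / m * m + (t' - (i : ZMod (2 * m ^ 2 + m))).val % m : ℕ)
          : ZMod (2 * m ^ 2 + m)) = t' := by rw [hgt]; exact hdecomp t'
      rw [h1, h2] at hd
      exact hd v ((Finset.mem_filter.mp (Finset.mem_coe.mp ht)).2)
        ((Finset.mem_filter.mp (Finset.mem_coe.mp ht')).2)
    set I : Finset ℕ := T.image (fun t : ZMod (2 * m ^ 2 + m) => (t - (i : ZMod (2 * m ^ 2 + m))).val / m) with hIdef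
    have hIcard : I.card = 2 * m := by
      rw [hIdef, Finset.card_image_of_injOn hg_injOn, hTcard]
    have hIsub : I ⊆ Finset.range (2 * m + 1) := by
      intro x hx
      obtain ⟨t, _, rfl⟩ := Finset.mem_image.mp hx
      exact Finset.mem_range.mpr (hglt t)
    have hD : (Finset.range (2 * m + 1) \ I).card = 1 := by
      rw [Finset.card_sdiff_of_subset hIsub, hIcard, Finset.card_range]
      omega
    obtain ⟨k₀, hk₀⟩ := Finset.card_eq_one.mp hD
    have hchar : ∀ k : ℕ, (k ≤ 2 * m ∧ ∀ j : ℕ, j < m →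
        v ∉ (f ((i + k * m + j : ℕ) : ZMod (2 * m ^ 2 + m)) : Sym2 (Fin (2 * m + 1)))) ↔
        k ∈ Finset.range (2 * m + 1) \ I := by
      intro k
      constructor
      · rintro ⟨hk, hnone⟩
        rw [Finset.mem_sdiff]
        refine ⟨Finset.mem_range.mpr (by omega), ?_⟩
        intro hkI
        obtain ⟨t, htm, hgt⟩ := Finset.mem_image.mp hkI
        have hvt : v ∈ (f t : Sym2 (Fin (2 * m + 1))) := (Finset.mem_filter.mp htm).2
        refine hnone ((t - (i : ZMod (2 * m ^ 2 + m))).val % m) (Nat.mod_lt _ hm0) ?_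
        rw [show ((i + k * m + (t - (i : ZMod (2 * m ^ 2 + m))).val % m : ℕ) : ZMod (2 * m ^ 2 + m)) = t from by
          rw [← hgt]; exact hdecomp t]
        exact hvt
      · intro hkD
        rw [Finset.mem_sdiff, Finset.mem_range] at hkD
        refine ⟨by omega, ?_⟩
        intro j hj hvmem
        apply hkD.2
        apply Finset.mem_image.mpr
        refine ⟨((i + k * m + j : ℕ) : ZMod (2 * m ^ 2 + m)),
          Finset.mem_filter.mpr ⟨Finset.mem_univ _, hvmem⟩, ?_⟩
        have hval : (((i + k * m + j : ℕ) : ZMod (2 * m ^ 2 + m)) - (i : ZMod (2 * m ^ 2 + m))).val = k * m + j := by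
          have hsub : (((i + k * m + j : ℕ) : ZMod (2 * m ^ 2 + m)) - (i : ZMod (2 * m ^ 2 + m)))
              = ((k * m + j : ℕ) : ZMod (2 * m ^ 2 + m)) := by push_cast; ring
          rw [hsub, ZMod.val_cast_of_lt (hlt_blk k j (by omega) hj)]
        simp only [hval]
        rw [mul_comm, Nat.mul_add_div hm0, Nat.div_eq_of_lt hj]
        omega
    refine ⟨k₀, (hchar k₀).mpr (hk₀ ▸ Finset.mem_singleton_self k₀), ?_⟩
    intro k hk
    have := (hchar k).mp hk
    rw [hk₀] at this
    exact Finset.mem_singleton.mp this
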